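/- For every k > 0, (k+2)·ln(1+k)/(2k) > 1; equivalently, the flat-rate optimal revenue (N/4)·G·ln(1+k) strictly exceeds the usage-based optimal revenue N·G·k/(2(k+2)). -/

import Mathlib

open Real

lemma log_gt_aux (k : ℝ) (hk : 0 < k) : Real.log (1 + k) > 2 * k / (k + 2) := by
  set f : ℝ → ℝ := fun x => Real.log (1 + x) - 2 * x / (x + 2) with hf
  have hder : ∀ x : ℝ, 0 ≤ x → HasDerivAt f
      (1 / (1 + x) - (2 * (x + 2) - 2 * x * 1) / (x + 2) ^ 2) x := by
    intro x hx
    have h1 : (1 : ℝ) + x > 0 := by linarith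
    have h2 : x + 2 ≠ 0 := by positivity
    have hlog : HasDerivAt (fun x : ℝ => Real.log (1 + x)) (1 / (1 + x)) x := by
      have := ((hasDerivAt_id x).const_add 1).log (ne_of_gt h1)
      simpa using this
    have hd : HasDerivAt (fun x : ℝ => 2 * x / (x + 2))
        ((2 * (x + 2) - 2 * x * 1) / (x + 2) ^ 2) x :=
      HasDerivAt.div (by simpa using (hasDerivAt_id x).const_mul 2)
        ((hasDerivAt_id x).add_const 2) h2
    exact hlog.sub hd
  have hmono : StrictMonoOn f (Set.Ici 0) := by
    apply strictMonoOn_of_deriv_pos (convex_Ici 0)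
    · apply ContinuousOn.sub
      · apply ContinuousOn.log (by fun_prop)
        intro x hx
        simp only [Set.mem_Ici] at hx
        positivity
      · apply ContinuousOn.div (by fun_prop) (by fun_prop)
        intro x hx
        simp only [Set.mem_Ici] at hx
        positivity
    · intro x hx
      rw [interior_Ici] at hx
      simp only [Set.mem_Ioi] at hx
      rw [(hder x hx.le).deriv]
      have h1 : (1 : ℝ) + x > 0 := by linarith
      have h2 : (x + 2) ^ 2 > 0 := by positivity
      rw [div_sub_div _ _ (ne_of_gt h1) (ne_of_gt h2), lt_div_iff₀ (by positivity)]
      nlinarith [sq_nonneg x, mul_pos hx hx]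
  have h0 : f 0 = 0 := by simp [hf]
  have := hmono (Set.self_mem_Ici) (Set.mem_Ici.mpr hk.le) hk
  rw [h0] at this
  simp only [hf] at this
  linarith

theorem flat_rate_outperforms_usage (N G k : ℝ) (hN : 0 < N) (hG : 0 < G) (hk : 0 < k) :
    (k + 2) * Real.log (1 + k) / (2 * k) > 1 ∧
    N / 4 * G * Real.log (1 + k) > N * G * k / (2 * (k + 2)) := by
  have hlog := log_gt_aux k hk
  have hk2 : (0:ℝ) < k + 2 := by linarith
  have hkey : (k + 2) * Real.log (1 + k) > 2 * k := by
    have := (div_lt_iff₀ hk2).mp hlog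
    linarith
  constructor
  · rw [gt_iff_lt, lt_div_iff₀ (by positivity)]
    linarith
  · rw [gt_iff_lt, div_lt_iff₀ (by positivity)]
    nlinarith [mul_pos hN hG]
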